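/- The generalized IFS {I × ℝ²; w_i : i = 1, …, N} has an attractor G, i.e., a nonempty compact set G ⊂ ℝ³ with G = ⋃_{i=1}^N w_i(G), and G is the graph of a continuous vector-valued function f : I → ℝ² satisfying f(x_i) = (y_i, z_i) for all i = 0, 1, …, N; that is, G = {(x, f(x)) : x ∈ I}. -/

import Mathlib

open Set

private lemma glue_two {X : Type*} [TopologicalSpace X] {f : ℝ → X} {s t : Set ℝ}
    (hs : IsClosed s) (ht : IsClosed t)
    (hfs : ContinuousOn f s) (hft : ContinuousOn f t) :
    ContinuousOn f (s ∪ t) := by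
  intro p hp
  have hws : ContinuousWithinAt f s p := by
    by_cases h : p ∈ s
    · exact hfs p h
    · exact continuousWithinAt_of_notMem_closure (by rwa [hs.closure_eq])
  have hwt : ContinuousWithinAt f t p := by
    by_cases h : p ∈ t
    · exact hft p h
    · exact continuousWithinAt_of_notMem_closure (by rwa [ht.closure_eq])
  exact hws.union hwt

private lemma mono_aux (N : ℕ) (x : ℕ → ℝ) (hx : ∀ i, i < N → x i < x (i + 1)) :
    ∀ j, j ≤ N → ∀ i, i ≤ j → x i ≤ x j := by
  intro j
  induction j with
  | zero =>
    intro _ i hi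
    have hi0 : i = 0 := Nat.le_zero.mp hi
    subst hi0
    exact le_rfl
  | succ j ih =>
    intro hjN i hi
    rcases Nat.eq_or_lt_of_le hi with h | h
    · rw [h]
    · have h1 : i ≤ j := Nat.lt_succ_iff.mp h
      calc x i ≤ x j := ih (Nat.le_of_succ_le hjN) i h1
        _ ≤ x (j + 1) := (hx j (Nat.lt_of_succ_le hjN)).le

private lemma cover_aux (N : ℕ) (hN : 1 ≤ N) (x : ℕ → ℝ) :
    ∀ s ∈ Icc (x 0) (x N), ∃ i, 1 ≤ i ∧ i ≤ N ∧ s ∈ Icc (x (i - 1)) (x i) := by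
  induction N, hN using Nat.le_induction with
  | base => intro s hs; exact ⟨1, le_rfl, le_rfl, hs⟩
  | succ N hN ih =>
    intro s hs
    by_cases h : s ≤ x N
    · obtain ⟨i, h1, h2, h3⟩ := ih s ⟨hs.1, h⟩
      exact ⟨i, h1, Nat.le_succ_of_le h2, h3⟩
    · exact ⟨N + 1, by omega, le_rfl, ⟨(not_le.mp h).le, hs.2⟩⟩

private lemma glue_aux (N : ℕ) (hN : 1 ≤ N) (x : ℕ → ℝ)
    (hx : ∀ i, i < N → x i < x (i + 1)) (G : ℕ → ℝ → ℝ)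
    (hG : ∀ i, 1 ≤ i → i ≤ N → Continuous (G i))
    (hmatch : ∀ i, 1 ≤ i → i < N → G i (x i) = G (i + 1) (x i)) :
    ∃ g : ℝ → ℝ, ContinuousOn g (Icc (x 0) (x N)) ∧
      ∀ i, 1 ≤ i → i ≤ N → ∀ t ∈ Icc (x (i - 1)) (x i), g t = G i t := by
  induction N, hN using Nat.le_induction with
  | base =>
    refine ⟨G 1, (hG 1 le_rfl le_rfl).continuousOn, ?_⟩
    intro i h1 h2 t _
    have : i = 1 := le_antisymm h2 h1
    subst this; rfl
  | succ N hN ih =>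
    obtain ⟨g', hg'c, hg'⟩ := ih (fun i hi => hx i (Nat.lt_succ_of_lt hi))
      (fun i h1 h2 => hG i h1 (Nat.le_succ_of_le h2))
      (fun i h1 h2 => hmatch i h1 (Nat.lt_succ_of_lt h2))
    have h0N : x 0 ≤ x N :=
      mono_aux (N + 1) x hx N (Nat.le_succ N) 0 (Nat.zero_le N)
    have hNN1 : x N ≤ x (N + 1) := (hx N (Nat.lt_succ_self N)).le
    have hgN : g' (x N) = G N (x N) := by
      refine hg' N hN le_rfl (x N) ⟨?_, le_rfl⟩
      exact mono_aux (N + 1) x hx N (Nat.le_succ N) (N - 1) (Nat.sub_le N 1)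
    have hmN : G N (x N) = G (N + 1) (x N) := hmatch N hN (Nat.lt_succ_self N)
    refine ⟨fun t => if t ≤ x N then g' t else G (N + 1) t, ?_, ?_⟩
    · have E1 : EqOn (fun t => if t ≤ x N then g' t else G (N + 1) t) g'
          (Icc (x 0) (x N)) := fun t ht => if_pos ht.2
      have E2 : EqOn (fun t => if t ≤ x N then g' t else G (N + 1) t) (G (N + 1))
          (Icc (x N) (x (N + 1))) := by
        intro t ht
        by_cases h : t ≤ x N
        · have : t = x N := le_antisymm h ht.1
          subst this
          simp only [if_pos h, hgN, hmN]
        · simp only [if_neg h]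
      rw [← Icc_union_Icc_eq_Icc h0N hNN1]
      exact glue_two isClosed_Icc isClosed_Icc (hg'c.congr E1)
        ((hG (N + 1) (by omega) le_rfl).continuousOn.congr E2)
    · intro i h1 h2 t ht
      rcases Nat.lt_succ_iff_lt_or_eq.mp (Nat.lt_succ_of_le h2) with h | h
      · -- i ≤ N
        have hiN : i ≤ N := Nat.lt_succ_iff.mp h
        have htN : t ≤ x N :=
          le_trans ht.2 (mono_aux (N + 1) x hx N (Nat.le_succ N) i hiN)
        simp only [if_pos htN]
        exact hg' i h1 hiN t ht
      · subst h
        have ht' : t ∈ Icc (x N) (x (N + 1)) := by simpa using ht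
        by_cases hle : t ≤ x N
        · have : t = x N := le_antisymm hle ht'.1
          subst this
          simp only [if_pos hle, hgN, hmN]
        · simp only [if_neg hle]

private lemma scalarFIF (N : ℕ) (hN : 1 ≤ N) (x : ℕ → ℝ)
    (hx : ∀ i, i < N → x i < x (i + 1))
    (lam : ℕ → ℝ) (hlam : ∀ i, 1 ≤ i → i ≤ N → |lam i| < 1)
    (φ : ℕ → ℝ → ℝ) (hφ : ∀ i, 1 ≤ i → i ≤ N → Continuous (φ i))
    (aa bb : ℕ → ℝ) (haa : ∀ i, 1 ≤ i → i ≤ N → 0 < aa i)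
    (hL0 : ∀ i, 1 ≤ i → i ≤ N → aa i * x 0 + bb i = x (i - 1))
    (hLN : ∀ i, 1 ≤ i → i ≤ N → aa i * x N + bb i = x i)
    (v : ℕ → ℝ)
    (hm : ∀ i, 1 ≤ i → i ≤ N →
      lam i * v 0 + φ i (x 0) = v (i - 1) ∧ lam i * v N + φ i (x N) = v i) :
    ∃ g : ℝ → ℝ, Continuous g ∧ (∀ i, i ≤ N → g (x i) = v i) ∧
      ∀ i, 1 ≤ i → i ≤ N → ∀ t ∈ Icc (x 0) (x N),
        g (aa i * t + bb i) = lam i * g t + φ i t := by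
  have mono := mono_aux N x hx
  have h0N : x 0 ≤ x N := mono N le_rfl 0 (Nat.zero_le N)
  have h0N' : x 0 < x N := by
    have h1 := hx (N - 1) (by omega)
    have h2 : x 0 ≤ x (N - 1) := mono (N - 1) (Nat.sub_le N 1) 0 (Nat.zero_le _)
    rw [Nat.sub_add_cancel hN] at h1
    linarith
  have mem0 : x 0 ∈ Icc (x 0) (x N) := left_mem_Icc.mpr h0N
  have memN : x N ∈ Icc (x 0) (x N) := right_mem_Icc.mpr h0N
  have subK : ∀ i, 1 ≤ i → i ≤ N → Icc (x (i - 1)) (x i) ⊆ Icc (x 0) (x N) :=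
    fun i h1 h2 => Icc_subset_Icc
      (mono (i - 1) (le_trans (Nat.sub_le i 1) h2) 0 (Nat.zero_le _))
      (mono N le_rfl i h2)
  have hLmem : ∀ i, 1 ≤ i → i ≤ N → ∀ t ∈ Icc (x 0) (x N),
      aa i * t + bb i ∈ Icc (x (i - 1)) (x i) := by
    intro i h1 h2 t ht
    have ha := haa i h1 h2
    constructor
    · nlinarith [hL0 i h1 h2, ht.1]
    · nlinarith [hLN i h1 h2, ht.2]
  have hLinvMem : ∀ i, 1 ≤ i → i ≤ N → ∀ s ∈ Icc (x (i - 1)) (x i),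
      (s - bb i) / aa i ∈ Icc (x 0) (x N) := by
    intro i h1 h2 s hs
    have ha := haa i h1 h2
    constructor
    · rw [le_div_iff₀ ha]; nlinarith [hL0 i h1 h2, hs.1]
    · rw [div_le_iff₀ ha]; nlinarith [hLN i h1 h2, hs.2]
  have hLinvL : ∀ i, 1 ≤ i → i ≤ N → ∀ t : ℝ, (aa i * t + bb i - bb i) / aa i = t := by
    intro i h1 h2 t
    have ha := (haa i h1 h2).ne'
    field_simp
    ring
  have hLinv0 : ∀ i, 1 ≤ i → i ≤ N → (x (i - 1) - bb i) / aa i = x 0 := by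
    intro i h1 h2
    rw [← hL0 i h1 h2]; exact hLinvL i h1 h2 (x 0)
  have hLinvN : ∀ i, 1 ≤ i → i ≤ N → (x i - bb i) / aa i = x N := by
    intro i h1 h2
    rw [← hLN i h1 h2]; exact hLinvL i h1 h2 (x N)
  -- contraction constant
  have Fne : (Finset.Icc 1 N).Nonempty := Finset.nonempty_Icc.mpr hN
  set sK : ℝ := (Finset.Icc 1 N).sup' Fne (fun i => |lam i|) with hsKdef
  have hsK1 : sK < 1 := (Finset.sup'_lt_iff Fne).mpr fun i hi =>
    hlam i (Finset.mem_Icc.mp hi).1 (Finset.mem_Icc.mp hi).2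
  have hle : ∀ i, 1 ≤ i → i ≤ N → |lam i| ≤ sK := fun i h1 h2 => by
    exact Finset.le_sup' (fun j => |lam j|) (Finset.mem_Icc.mpr ⟨h1, h2⟩)
  have hsK0 : 0 ≤ sK := le_trans (abs_nonneg (lam 1)) (hle 1 le_rfl hN)
  -- the function space and the closed subset P
  let p0 : ↥(Icc (x 0) (x N)) := ⟨x 0, mem0⟩
  let pN : ↥(Icc (x 0) (x N)) := ⟨x N, memN⟩
  let P : Set C(↥(Icc (x 0) (x N)), ℝ) := {g | g p0 = v 0 ∧ g pN = v N}
  have hPc : IsClosed P := by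
    have h1 : IsClosed {g : C(↥(Icc (x 0) (x N)), ℝ) | g p0 = v 0} :=
      isClosed_eq (continuous_eval_const p0) continuous_const
    have h2 : IsClosed {g : C(↥(Icc (x 0) (x N)), ℝ) | g pN = v N} :=
      isClosed_eq (continuous_eval_const pN) continuous_const
    exact h1.inter h2
  have hg0cont : Continuous fun t : ↥(Icc (x 0) (x N)) =>
      v 0 + (v N - v 0) * ((t : ℝ) - x 0) / (x N - x 0) := by fun_prop
  have hg0P : (⟨_, hg0cont⟩ : C(↥(Icc (x 0) (x N)), ℝ)) ∈ P := by
    constructor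
    · show v 0 + (v N - v 0) * (x 0 - x 0) / (x N - x 0) = v 0
      simp
    · show v 0 + (v N - v 0) * (x N - x 0) / (x N - x 0) = v N
      rw [mul_div_assoc, div_self (sub_ne_zero.mpr h0N'.ne')]
      ring
  -- the operator
  have exT : ∀ g : C(↥(Icc (x 0) (x N)), ℝ), g ∈ P →
      ∃ Tg : C(↥(Icc (x 0) (x N)), ℝ), Tg ∈ P ∧
        ∀ i, 1 ≤ i → i ≤ N → ∀ s ∈ Icc (x (i - 1)) (x i),
          IccExtend h0N ⇑Tg s =
            lam i * IccExtend h0N ⇑g ((s - bb i) / aa i) + φ i ((s - bb i) / aa i) := by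
    intro g hg
    set Eg : ℝ → ℝ := IccExtend h0N ⇑g with hEgdef
    have hEgc : Continuous Eg := g.continuous.comp continuous_projIcc
    have hEg0 : Eg (x 0) = v 0 := by
      rw [hEgdef, IccExtend_of_mem h0N _ mem0]; exact hg.1
    have hEgN : Eg (x N) = v N := by
      rw [hEgdef, IccExtend_of_mem h0N _ memN]; exact hg.2
    obtain ⟨gl, hglc, hgl⟩ := glue_aux N hN x hx
      (fun i s => lam i * Eg ((s - bb i) / aa i) + φ i ((s - bb i) / aa i))
      (fun i h1 h2 => by
        have hc : Continuous fun s : ℝ => (s - bb i) / aa i := by fun_prop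
        exact (continuous_const.mul (hEgc.comp hc)).add ((hφ i h1 h2).comp hc))
      (fun i h1 h2 => by
        have e1 : (x i - bb i) / aa i = x N := hLinvN i h1 (le_of_lt h2)
        have e2 : (x i - bb (i + 1)) / aa (i + 1) = x 0 := by
          have := hLinv0 (i + 1) (by omega) h2
          simpa using this
        rw [e1, e2, hEgN, hEg0, (hm i h1 (le_of_lt h2)).2, (hm (i + 1) (by omega) h2).1]
        simp)
    have glC : Continuous fun t : ↥(Icc (x 0) (x N)) => gl ↑t :=
      continuousOn_iff_continuous_restrict.mp hglc
    have hval : ∀ s (hs : s ∈ Icc (x 0) (x N)),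
        IccExtend h0N (fun t : ↥(Icc (x 0) (x N)) => gl ↑t) s = gl s := by
      intro s hs
      rw [IccExtend_of_mem h0N _ hs]
    refine ⟨⟨fun t => gl ↑t, glC⟩, ⟨?_, ?_⟩, ?_⟩
    · show gl (x 0) = v 0
      have h00 : x 0 ∈ Icc (x (1 - 1)) (x 1) := by
        refine ⟨le_rfl, mono 1 hN 0 (Nat.zero_le 1)⟩
      rw [hgl 1 le_rfl hN (x 0) h00]
      have e0 : (x 0 - bb 1) / aa 1 = x 0 := hLinv0 1 le_rfl hN
      rw [e0, hEg0]
      exact (hm 1 le_rfl hN).1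
    · show gl (x N) = v N
      have hNN : x N ∈ Icc (x (N - 1)) (x N) :=
        ⟨mono N le_rfl (N - 1) (Nat.sub_le N 1), le_rfl⟩
      rw [hgl N hN le_rfl (x N) hNN]
      rw [hLinvN N hN le_rfl, hEgN]
      exact (hm N hN le_rfl).2
    · intro i h1 h2 s hs
      have hsK' : s ∈ Icc (x 0) (x N) := subK i h1 h2 hs
      rw [IccExtend_of_mem h0N _ hsK']
      show gl s = _
      rw [hgl i h1 h2 s hs]
  -- set up the fixed point
  haveI : CompleteSpace ↥P := hPc.completeSpace_coe
  haveI : Nonempty ↥P := ⟨⟨_, hg0P⟩⟩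
  let T : ↥P → ↥P := fun g => ⟨(exT ↑g g.2).choose, ((exT ↑g g.2).choose_spec).1⟩
  have hTspec : ∀ g : ↥P, ∀ i, 1 ≤ i → i ≤ N → ∀ s ∈ Icc (x (i - 1)) (x i),
      IccExtend h0N ⇑(↑(T g) : C(↥(Icc (x 0) (x N)), ℝ)) s =
        lam i * IccExtend h0N ⇑(↑g : C(↥(Icc (x 0) (x N)), ℝ)) ((s - bb i) / aa i) +
          φ i ((s - bb i) / aa i) :=
    fun g => ((exT ↑g g.2).choose_spec).2
  have hcontr : ContractingWith ⟨sK, hsK0⟩ T := by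
    constructor
    · exact_mod_cast hsK1
    · apply LipschitzWith.of_dist_le_mul
      intro g₁ g₂
      have goal : dist (↑(T g₁) : C(↥(Icc (x 0) (x N)), ℝ)) ↑(T g₂) ≤
          sK * dist (↑g₁ : C(↥(Icc (x 0) (x N)), ℝ)) ↑g₂ := by
        rw [ContinuousMap.dist_le (mul_nonneg hsK0 dist_nonneg)]
        intro p
        obtain ⟨i, h1, h2, h3⟩ := cover_aux N hN x ↑p p.2
        have hp' : (⟨↑p, p.2⟩ : ↥(Icc (x 0) (x N))) = p := Subtype.coe_eta p p.2
        have hu : (↑p - bb i) / aa i ∈ Icc (x 0) (x N) := hLinvMem i h1 h2 ↑p h3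
        have e1 := hTspec g₁ i h1 h2 ↑p h3
        have e2 := hTspec g₂ i h1 h2 ↑p h3
        rw [IccExtend_of_mem h0N _ p.2, hp'] at e1 e2
        rw [IccExtend_of_mem h0N _ hu] at e1 e2
        rw [e1, e2, Real.dist_eq]
        have harith : lam i * (↑g₁ : C(↥(Icc (x 0) (x N)), ℝ)) ⟨_, hu⟩ +
              φ i ((↑p - bb i) / aa i) -
            (lam i * (↑g₂ : C(↥(Icc (x 0) (x N)), ℝ)) ⟨_, hu⟩ +
              φ i ((↑p - bb i) / aa i)) =
            lam i * ((↑g₁ : C(↥(Icc (x 0) (x N)), ℝ)) ⟨_, hu⟩ -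
              (↑g₂ : C(↥(Icc (x 0) (x N)), ℝ)) ⟨_, hu⟩) := by ring
        rw [harith, abs_mul]
        have hb1 : |(↑g₁ : C(↥(Icc (x 0) (x N)), ℝ)) ⟨_, hu⟩ -
            (↑g₂ : C(↥(Icc (x 0) (x N)), ℝ)) ⟨_, hu⟩| ≤
            dist (↑g₁ : C(↥(Icc (x 0) (x N)), ℝ)) ↑g₂ := by
          rw [← Real.dist_eq]
          exact ContinuousMap.dist_apply_le_dist _
        exact mul_le_mul (hle i h1 h2) hb1 (abs_nonneg _) hsK0
      exact goal
  set gstar := ContractingWith.fixedPoint T hcontr with hgstar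
  have hfix : T gstar = gstar := hcontr.fixedPoint_isFixedPt
  have hkey : ∀ i, 1 ≤ i → i ≤ N → ∀ s ∈ Icc (x (i - 1)) (x i),
      IccExtend h0N ⇑(↑gstar : C(↥(Icc (x 0) (x N)), ℝ)) s =
        lam i * IccExtend h0N ⇑(↑gstar : C(↥(Icc (x 0) (x N)), ℝ)) ((s - bb i) / aa i) +
          φ i ((s - bb i) / aa i) := by
    intro i h1 h2 s hs
    have := hTspec gstar i h1 h2 s hs
    rwa [hfix] at this
  refine ⟨IccExtend h0N ⇑(↑gstar : C(↥(Icc (x 0) (x N)), ℝ)), ?_, ?_, ?_⟩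
  · exact (ContinuousMap.continuous _).comp continuous_projIcc
  · intro i hiN
    rcases Nat.eq_zero_or_pos i with h | h
    · subst h
      rw [IccExtend_of_mem h0N _ mem0]
      exact gstar.2.1
    · have hmemI : x i ∈ Icc (x (i - 1)) (x i) :=
        ⟨mono i hiN (i - 1) (Nat.sub_le i 1), le_rfl⟩
      rw [hkey i h hiN (x i) hmemI, hLinvN i h hiN, IccExtend_of_mem h0N _ memN]
      rw [show (↑gstar : C(↥(Icc (x 0) (x N)), ℝ)) pN = v N from gstar.2.2]
      exact (hm i h hiN).2
  · intro i h1 h2 t ht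
    have := hkey i h1 h2 (aa i * t + bb i) (hLmem i h1 h2 t ht)
    rwa [hLinvL i h1 h2 t] at this

theorem stmt_17
    (N : ℕ) (hN : 1 ≤ N) (x y z : ℕ → ℝ)
    (hx : ∀ i, i < N → x i < x (i + 1))
    (a b c d e f α β γ : ℕ → ℝ)
    (ha : ∀ i, 1 ≤ i → i ≤ N → a i = (x i - x (i - 1)) / (x N - x 0))
    (hL : ∀ i, 1 ≤ i → i ≤ N → a i * x 0 + b i = x (i - 1) ∧ a i * x N + b i = x i)
    (hα : ∀ i, 1 ≤ i → i ≤ N → |α i| < 1)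
    (hγ : ∀ i, 1 ≤ i → i ≤ N → |γ i| < 1)
    (hβγ : ∀ i, 1 ≤ i → i ≤ N → |β i| + |γ i| < 1)
    (w : ℕ → ℝ × ℝ × ℝ → ℝ × ℝ × ℝ)
    (hw : ∀ i p, w i p =
      (a i * p.1 + b i,
       α i * p.2.1 + β i * p.2.2 + c i * p.1 + d i,
       γ i * p.2.2 + e i * p.1 + f i))
    (hjoin : ∀ i, 1 ≤ i → i ≤ N →
      w i (x 0, y 0, z 0) = (x (i - 1), y (i - 1), z (i - 1)) ∧
      w i (x N, y N, z N) = (x i, y i, z i)) :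
    ∃ G : Set (ℝ × ℝ × ℝ),
      G.Nonempty ∧ IsCompact G ∧
      G = (⋃ i ∈ Set.Icc 1 N, w i '' G) ∧
      ∃ fg : ℝ → ℝ × ℝ,
        ContinuousOn fg (Set.Icc (x 0) (x N)) ∧
        (∀ i, i ≤ N → fg (x i) = (y i, z i)) ∧
        G = (fun t => (t, fg t)) '' Set.Icc (x 0) (x N) := by
  have hj : ∀ i, 1 ≤ i → i ≤ N →
      (α i * y 0 + β i * z 0 + c i * x 0 + d i = y (i - 1)) ∧
      (γ i * z 0 + e i * x 0 + f i = z (i - 1)) ∧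
      (α i * y N + β i * z N + c i * x N + d i = y i) ∧
      (γ i * z N + e i * x N + f i = z i) := by
    intro i h1 h2
    have h := hjoin i h1 h2
    simp only [hw, Prod.mk.injEq] at h
    exact ⟨h.1.2.1, h.1.2.2, h.2.2.1, h.2.2.2⟩
  have mono := mono_aux N x hx
  have h0N : x 0 ≤ x N := mono N le_rfl 0 (Nat.zero_le N)
  have h0N' : x 0 < x N := by
    have h1 := hx (N - 1) (by omega)
    have h2 : x 0 ≤ x (N - 1) := mono (N - 1) (Nat.sub_le N 1) 0 (Nat.zero_le _)
    rw [Nat.sub_add_cancel hN] at h1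
    linarith
  have haa : ∀ i, 1 ≤ i → i ≤ N → 0 < a i := by
    intro i h1 h2
    rw [ha i h1 h2]
    apply div_pos
    · have h3 := hx (i - 1) (by omega)
      rw [Nat.sub_add_cancel h1] at h3
      linarith
    · linarith
  obtain ⟨h, hhc, hhnode, hhfun⟩ := scalarFIF N hN x hx γ hγ
    (fun i t => e i * t + f i) (fun i _ _ => by fun_prop)
    a b haa (fun i h1 h2 => (hL i h1 h2).1) (fun i h1 h2 => (hL i h1 h2).2) z
    (fun i h1 h2 => ⟨by have := (hj i h1 h2).2.1; linarith,
                     by have := (hj i h1 h2).2.2.2; linarith⟩)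
  obtain ⟨g, hgc, hgnode, hgfun⟩ := scalarFIF N hN x hx α hα
    (fun i t => β i * h t + c i * t + d i) (fun i _ _ => by fun_prop)
    a b haa (fun i h1 h2 => (hL i h1 h2).1) (fun i h1 h2 => (hL i h1 h2).2) y
    (fun i h1 h2 => ⟨by
        have h3 := (hj i h1 h2).1
        have h4 := hhnode 0 (Nat.zero_le N)
        rw [h4]
        linarith,
      by
        have h3 := (hj i h1 h2).2.2.1
        have h4 := hhnode N le_rfl
        rw [h4]
        linarith⟩)
  have hwEq : ∀ i, 1 ≤ i → i ≤ N → ∀ t ∈ Icc (x 0) (x N),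
      w i (t, g t, h t) = (a i * t + b i, g (a i * t + b i), h (a i * t + b i)) := by
    intro i h1 h2 t ht
    have e1 : g (a i * t + b i) = α i * g t + β i * h t + c i * t + d i := by
      rw [hgfun i h1 h2 t ht]; ring
    have e2 : h (a i * t + b i) = γ i * h t + e i * t + f i := by
      rw [hhfun i h1 h2 t ht]; ring
    rw [hw]
    dsimp only
    rw [e1, e2]
  have hLmemK : ∀ i, 1 ≤ i → i ≤ N → ∀ t ∈ Icc (x 0) (x N),
      a i * t + b i ∈ Icc (x 0) (x N) := by
    intro i h1 h2 t ht
    have hai := haa i h1 h2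
    have hl0 := (hL i h1 h2).1
    have hlN := (hL i h1 h2).2
    have hx0 : x 0 ≤ x (i - 1) :=
      mono (i - 1) (le_trans (Nat.sub_le i 1) h2) 0 (Nat.zero_le _)
    have hxN : x i ≤ x N := mono N le_rfl i h2
    constructor
    · nlinarith [ht.1]
    · nlinarith [ht.2]
  refine ⟨(fun t => (t, g t, h t)) '' Icc (x 0) (x N), ?_, ?_, ?_, ?_⟩
  · exact ⟨_, mem_image_of_mem _ (left_mem_Icc.mpr h0N)⟩
  · exact isCompact_Icc.image (by fun_prop)
  · apply Subset.antisymm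
    · rintro _ ⟨t, ht, rfl⟩
      obtain ⟨i, h1, h2, h3⟩ := cover_aux N hN x t ht
      have hai := haa i h1 h2
      have hut : a i * ((t - b i) / a i) + b i = t := by
        field_simp
        ring
      have huK : (t - b i) / a i ∈ Icc (x 0) (x N) := by
        constructor
        · rw [le_div_iff₀ hai]; nlinarith [(hL i h1 h2).1, h3.1]
        · rw [div_le_iff₀ hai]; nlinarith [(hL i h1 h2).2, h3.2]
      refine mem_iUnion₂.mpr ⟨i, mem_Icc.mpr ⟨h1, h2⟩, ?_⟩
      refine ⟨((t - b i) / a i, g ((t - b i) / a i), h ((t - b i) / a i)),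
        mem_image_of_mem _ huK, ?_⟩
      rw [hwEq i h1 h2 _ huK, hut]
    · intro p hp
      rw [mem_iUnion₂] at hp
      obtain ⟨i, hi, hq⟩ := hp
      rw [mem_Icc] at hi
      obtain ⟨_, ⟨t, ht, rfl⟩, rfl⟩ := hq
      rw [hwEq i hi.1 hi.2 t ht]
      exact mem_image_of_mem _ (hLmemK i hi.1 hi.2 t ht)
  · refine ⟨fun t => (g t, h t), (hgc.prodMk hhc).continuousOn, ?_, rfl⟩
    intro i hiN
    show (g (x i), h (x i)) = (y i, z i)
    rw [hgnode i hiN, hhnode i hiN]
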